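/- Let k be a field of characteristic zero and f ∈ A = k[x_1,…,x_n] a nonconstant polynomial. Then A is a free module over B = k[y], where the B-module structure is given by y ↦ f. -/

import Mathlib

open MvPolynomial

section Deg
variable {σ R : Type*} [CommRing R] [IsDomain R]

omit [IsDomain R] in
lemma homComp_top_ne_zero {p : MvPolynomial σ R} (hp : p ≠ 0) :
    homogeneousComponent p.totalDegree p ≠ 0 := by
  obtain ⟨s, hs, hsd⟩ := Finset.exists_mem_eq_sup p.support
    (support_nonempty.mpr hp) (fun s => s.sum fun _ e => e)
  intro h
  have hc := coeff_homogeneousComponent (σ := σ) p.totalDegree p s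
  rw [h] at hc
  have hdeg : s.degree = p.totalDegree := by
    rw [totalDegree, hsd]; rfl
  rw [if_pos hdeg] at hc
  exact (mem_support_iff.mp hs) (by simpa using hc.symm)

omit [IsDomain R] in
lemma totalDegree_lt_of_sub {p : MvPolynomial σ R}
    (h : p - homogeneousComponent p.totalDegree p ≠ 0) :
    (p - homogeneousComponent p.totalDegree p).totalDegree < p.totalDegree := by
  set P := homogeneousComponent p.totalDegree p with hP
  have hle : (p - P).totalDegree ≤ p.totalDegree :=
    (totalDegree_sub p P).trans (max_le le_rfl
      (homogeneousComponent_isHomogeneous p.totalDegree p).totalDegree_le)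
  rcases lt_or_eq_of_le hle with h' | h'
  · exact h'
  · exfalso
    have := homComp_top_ne_zero h
    rw [h'] at this
    apply this
    rw [map_sub, homogeneousComponent_of_mem (homogeneousComponent_mem p.totalDegree p),
      if_pos rfl, sub_self]

lemma totalDegree_mul_eq {p q : MvPolynomial σ R} (hp : p ≠ 0) (hq : q ≠ 0) :
    (p * q).totalDegree = p.totalDegree + q.totalDegree := by
  refine le_antisymm (totalDegree_mul p q) ?_
  by_contra hcon
  push_neg at hcon
  set dp := p.totalDegree
  set dq := q.totalDegree
  set P := homogeneousComponent dp p with hPdef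
  set Q := homogeneousComponent dq q with hQdef
  have hP : P ≠ 0 := homComp_top_ne_zero hp
  have hQ : Q ≠ 0 := homComp_top_ne_zero hq
  have hsplit : p * q = (p - P) * q + P * (q - Q) + P * Q := by ring
  have h1 : homogeneousComponent (dp + dq) ((p - P) * q) = 0 := by
    by_cases h0 : p - P = 0
    · rw [h0, zero_mul, map_zero]
    · apply homogeneousComponent_eq_zero
      calc ((p - P) * q).totalDegree ≤ (p - P).totalDegree + dq := totalDegree_mul _ _
        _ < dp + dq := by exact Nat.add_lt_add_right (totalDegree_lt_of_sub h0) dq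
  have h2 : homogeneousComponent (dp + dq) (P * (q - Q)) = 0 := by
    by_cases h0 : q - Q = 0
    · rw [h0, mul_zero, map_zero]
    · apply homogeneousComponent_eq_zero
      calc (P * (q - Q)).totalDegree ≤ P.totalDegree + (q - Q).totalDegree :=
            totalDegree_mul _ _
        _ < dp + dq := by
            have h4 := totalDegree_lt_of_sub h0
            have hPle : P.totalDegree ≤ dp :=
              (homogeneousComponent_isHomogeneous dp p).totalDegree_le
            rw [← hQdef] at h4
            omega
  have h3 : homogeneousComponent (dp + dq) (P * Q) = P * Q := by
    rw [homogeneousComponent_of_mem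
      (((homogeneousComponent_isHomogeneous dp p).mul
        (homogeneousComponent_isHomogeneous dq q)) : P * Q ∈ _), if_pos rfl]
  have hz : homogeneousComponent (dp + dq) (p * q) = 0 :=
    homogeneousComponent_eq_zero _ _ hcon
  rw [hsplit, map_add, map_add, h1, h2, h3, zero_add, zero_add] at hz
  exact (mul_ne_zero hP hQ) hz

end Deg

lemma exists_compl_within {K M : Type*} [Field K] [AddCommGroup M] [Module K M]
    {W F : Submodule K M} (h : W ≤ F) :
    ∃ V : Submodule K M, V ≤ F ∧ V ⊓ W = ⊥ ∧ V ⊔ W = F := by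
  obtain ⟨V', hV'⟩ := (W.comap F.subtype).exists_isCompl
  refine ⟨V'.map F.subtype, Submodule.map_subtype_le F V', ?_, ?_⟩
  · rw [eq_bot_iff]
    rintro x ⟨hx1, hx2⟩
    obtain ⟨y, hy, rfl⟩ := hx1
    have : y ∈ V' ⊓ W.comap F.subtype := ⟨hy, by simpa using hx2⟩
    rw [hV'.symm.inf_eq_bot] at this
    simpa using this
  · apply le_antisymm
    · exact sup_le (Submodule.map_subtype_le F V') h
    · intro x hx
      have : (⟨x, hx⟩ : F) ∈ V' ⊔ W.comap F.subtype := by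
        rw [hV'.symm.sup_eq_top]; trivial
      obtain ⟨v, hv, w, hw, hvw⟩ := Submodule.mem_sup.mp this
      refine Submodule.mem_sup.mpr ⟨v, Submodule.mem_map_of_mem hv, w, hw, ?_⟩
      exact congrArg Subtype.val hvw

/-- Let `k` be a field of characteristic zero and `f ∈ A = k[x₁,…,xₙ]`
a nonconstant polynomial.  Then `A` is a free module over `B = k[y]`, where the `B`-module
structure is induced by the `k`-algebra homomorphism `B → A` sending `y ↦ f`. -/
theorem unfolding_stmt3 (k : Type*) [Field k] [CharZero k] (n : ℕ)
    (f : MvPolynomial (Fin n) k) (hf : ∀ c : k, f ≠ C c) :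
    letI : Module (Polynomial k) (MvPolynomial (Fin n) k) :=
      Module.compHom _ (Polynomial.aeval f).toRingHom
    Module.Free (Polynomial k) (MvPolynomial (Fin n) k) := by
  letI : Module (Polynomial k) (MvPolynomial (Fin n) k) :=
    Module.compHom _ (Polynomial.aeval f).toRingHom
  show Module.Free (Polynomial k) (MvPolynomial (Fin n) k)
  have hsmul : ∀ (p : Polynomial k) (a : MvPolynomial (Fin n) k),
      p • a = Polynomial.aeval f p * a :=
    fun _ _ => rfl
  have hf0 : f ≠ 0 := fun h => hf 0 (by simpa using h)
  set d := f.totalDegree with hd_def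
  have hd : 0 < d := by
    rcases Nat.eq_zero_or_pos d with h | h
    · exfalso
      apply hf (coeff 0 f)
      apply MvPolynomial.ext
      intro m
      rw [coeff_C]
      by_cases hm : 0 = m
      · subst hm; rfl
      · by_contra hc
        rw [if_neg hm] at hc
        have hmem : m ∈ f.support := mem_support_iff.mpr hc
        have := (totalDegree_eq_zero_iff (Fin n) f).mp h m hmem
        exact hm (Finsupp.ext fun x => (this x).symm)
    · exact h
  classical
  set F : ℕ → Submodule k (MvPolynomial (Fin n) k) :=
    fun m => restrictTotalDegree (Fin n) k m with hF
  have hFmem : ∀ (p : MvPolynomial (Fin n) k) (m : ℕ), p ∈ F m ↔ p.totalDegree ≤ m :=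
    fun p m => mem_restrictTotalDegree (Fin n) m p
  have hFmono : ∀ {a b : ℕ}, a ≤ b → F a ≤ F b := by
    intro a b hab p hp
    rw [hFmem] at hp ⊢; omega
  set W : ℕ → Submodule k (MvPolynomial (Fin n) k) := fun m =>
    (⨆ (m' : ℕ) (_ : m' < m), F m') ⊔
      (⨆ (j : ℕ) (_ : j + d ≤ m), (F j).map (LinearMap.mulLeft k f)) with hW
  have hWF : ∀ m, W m ≤ F m := by
    intro m
    refine sup_le (iSup₂_le fun m' h => hFmono h.le) (iSup₂_le fun j hj => ?_)
    rintro x ⟨b, hb, rfl⟩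
    have hb' : b.totalDegree ≤ j := (hFmem b j).mp hb
    rw [LinearMap.mulLeft_apply, hFmem]
    have := totalDegree_mul f b
    omega
  choose V hV1 hV2 hV3 using fun m => exists_compl_within (hWF m)
  set Vt : Submodule k (MvPolynomial (Fin n) k) := ⨆ m, V m with hVt
  set S : Submodule k (MvPolynomial (Fin n) k) :=
    ⨆ i : ℕ, (Vt.map (LinearMap.mulLeft k (f ^ i))) with hS
  have hVtS : Vt ≤ S := by
    refine le_trans ?_ (le_iSup (fun i => (Vt.map (LinearMap.mulLeft k (f ^ i)))) 0)
    intro v hv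
    exact ⟨v, hv, by simp⟩
  have hSmul : S.map (LinearMap.mulLeft k f) ≤ S := by
    rw [hS, Submodule.map_iSup]
    refine iSup_le fun i => ?_
    rw [← Submodule.map_comp, ← LinearMap.mulLeft_mul, ← pow_succ']
    exact le_iSup (fun i => (Vt.map (LinearMap.mulLeft k (f ^ i)))) (i + 1)
  have hFS : ∀ m, F m ≤ S := by
    intro m
    induction m using Nat.strong_induction_on with
    | _ m IH =>
      rw [← hV3 m]
      refine sup_le (le_trans (le_iSup V m) hVtS) (sup_le (iSup₂_le fun m' h => IH m' h)
        (iSup₂_le fun j hj => ?_))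
      have hjm : j < m := by omega
      exact le_trans (Submodule.map_mono (IH j hjm)) hSmul
  have hStop : ∀ p : MvPolynomial (Fin n) k, p ∈ S :=
    fun p => hFS p.totalDegree ((hFmem p p.totalDegree).mpr le_rfl)
  -- the independence side
  set VS : ℕ → Submodule k (MvPolynomial (Fin n) k) :=
    fun m => ⨆ (m' : ℕ) (_ : m' < m), V m' with hVS
  have hsplitVS : ∀ m, VS (m + 1) = VS m ⊔ V m := by
    intro m
    apply le_antisymm
    · refine iSup₂_le fun m' h => ?_
      rcases Nat.lt_succ_iff_lt_or_eq.mp h with h' | rfl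
      · exact le_trans (le_iSup₂ (f := fun m' (_ : m' < m) => V m') m' h') le_sup_left
      · exact le_sup_right
    · refine sup_le (iSup₂_le fun m' h => le_iSup₂ (f := fun m' (_ : m' < m + 1) => V m')
        m' (h.trans (Nat.lt_succ_self m))) (le_iSup₂ (f := fun m' (_ : m' < m + 1) => V m')
        m (Nat.lt_succ_self m))
  have hVSF : ∀ m, VS (m + 1) ≤ F m :=
    fun m => iSup₂_le fun m' h => (hV1 m').trans (hFmono (Nat.lt_succ_iff.mp h))
  have hVSW : ∀ m, VS m ≤ W m := by
    intro m
    refine le_trans ?_ le_sup_left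
    exact iSup₂_le fun m' h =>
      le_trans (hV1 m') (le_iSup₂ (f := fun m' (_ : m' < m) => F m') m' h)
  have hP : ∀ m, ∀ v ∈ VS m, ∀ b, v = f * b → v = 0 := by
    intro m
    induction m using Nat.strong_induction_on with
    | _ m IH =>
      rcases m with _ | mm
      · intro v hv b _
        have : VS 0 ≤ ⊥ := iSup₂_le fun m' h => absurd h (Nat.not_lt_zero _)
        simpa using this hv
      · intro v hv b hb
        by_cases hv0 : v = 0
        · exact hv0
        have hb0 : b ≠ 0 := by
          rintro rfl
          rw [mul_zero] at hb
          exact hv0 hb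
        have hvF : v ∈ F mm := hVSF mm hv
        rw [hsplitVS mm] at hv
        obtain ⟨u, hu, w, hw, huw⟩ := Submodule.mem_sup.mp hv
        have hdegv : v.totalDegree ≤ mm := (hFmem v mm).mp hvF
        have hdegb : d + b.totalDegree ≤ mm := by
          rw [hb, totalDegree_mul_eq hf0 hb0] at hdegv
          omega
        have hvW : v ∈ W mm := by
          refine Submodule.mem_sup_right ?_
          refine (le_iSup₂ (f := fun j (_ : j + d ≤ mm) => (F j).map (LinearMap.mulLeft k f))
            b.totalDegree (by omega)) ?_
          exact ⟨b, (hFmem b _).mpr le_rfl, by simp [hb]⟩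
        have huW : u ∈ W mm := hVSW mm hu
        have hw0 : w = 0 := by
          have hwW : w ∈ W mm := by
            have : w = v - u := by rw [← huw]; ring
            rw [this]
            exact sub_mem hvW huW
          have : w ∈ V mm ⊓ W mm := ⟨hw, hwW⟩
          rwa [hV2 mm, Submodule.mem_bot] at this
        have hvu : v = u := by rw [← huw, hw0, add_zero]
        exact IH mm (Nat.lt_succ_self mm) v (hvu ▸ hu) b (hvu ▸ hb)
  have hVf : ∀ v ∈ Vt, ∀ b, v = f * b → v = 0 := by
    intro v hv b hb
    have hdir : Directed (· ≤ ·) (fun m => VS (m + 1)) := by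
      intro a b
      exact ⟨max a b, iSup₂_le fun m' h => le_iSup₂ (f := fun m' (_ : m' < max a b + 1) => V m')
        m' (by omega), iSup₂_le fun m' h => le_iSup₂ (f := fun m' (_ : m' < max a b + 1) => V m')
        m' (by omega)⟩
    have hle : Vt ≤ ⨆ m, VS (m + 1) := by
      refine iSup_le fun m => le_trans ?_ (le_iSup (fun m => VS (m + 1)) m)
      exact le_iSup₂ (f := fun m' (_ : m' < m + 1) => V m') m (Nat.lt_succ_self m)
    obtain ⟨m, hm⟩ := (Submodule.mem_iSup_of_directed _ hdir).mp (hle hv)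
    exact hP (m + 1) v hm b hb
  -- directness over powers of f
  have hD : ∀ N (v : ℕ → MvPolynomial (Fin n) k), (∀ i, v i ∈ Vt) →
      (∑ i ∈ Finset.range N, f ^ i * v i = 0) → ∀ i < N, v i = 0 := by
    intro N
    induction N with
    | zero => intro v _ _ i hi; omega
    | succ N IH =>
      intro v hv hsum i hi
      rw [Finset.sum_range_succ'] at hsum
      simp only [pow_zero, one_mul] at hsum
      have hsum' : v 0 + f * (∑ i ∈ Finset.range N, f ^ i * v (i + 1)) = 0 := by
        rw [Finset.mul_sum, ← hsum, add_comm]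
        congr 1
        apply Finset.sum_congr rfl
        intro j _
        ring
      have hv0 : v 0 = 0 := by
        refine hVf (v 0) (hv 0) (-(∑ i ∈ Finset.range N, f ^ i * v (i + 1))) ?_
        rw [mul_neg]
        exact eq_neg_of_add_eq_zero_left hsum'
      rw [hv0, zero_add] at hsum'
      rcases mul_eq_zero.mp hsum' with h | h
      · exact absurd h hf0
      · rcases i with _ | j
        · exact hv0
        · exact IH (fun i => v (i + 1)) (fun i => hv (i + 1)) h j (by omega)
  -- basis
  set e : Module.Basis.ofVectorSpaceIndex k ↥Vt → MvPolynomial (Fin n) k :=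
    fun j => ((Module.Basis.ofVectorSpace k ↥Vt j : ↥Vt) : MvPolynomial (Fin n) k) with he
  have heV : ∀ j, e j ∈ Vt := fun j => ((Module.Basis.ofVectorSpace k ↥Vt) j).2
  have hek : LinearIndependent k e :=
    (Module.Basis.ofVectorSpace k ↥Vt).linearIndependent.map' Vt.subtype (Submodule.ker_subtype Vt)
  have hVt_span : ∀ v ∈ Vt, v ∈ Submodule.span k (Set.range e) := by
    intro v hv
    have h1 : (⟨v, hv⟩ : ↥Vt) ∈ Submodule.span k (Set.range ⇑(Module.Basis.ofVectorSpace k ↥Vt)) := by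
      rw [(Module.Basis.ofVectorSpace k ↥Vt).span_eq]; trivial
    have h2 : v ∈ Submodule.map Vt.subtype
        (Submodule.span k (Set.range ⇑(Module.Basis.ofVectorSpace k ↥Vt))) :=
      ⟨⟨v, hv⟩, h1, rfl⟩
    rw [Submodule.map_span] at h2
    have h3 : Vt.subtype '' Set.range ⇑(Module.Basis.ofVectorSpace k ↥Vt) = Set.range e := by
      rw [← Set.range_comp]; rfl
    rwa [h3] at h2
  have hkB : ∀ x, x ∈ Submodule.span k (Set.range e) →
      x ∈ Submodule.span (Polynomial k) (Set.range e) := by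
    intro x hx
    induction hx using Submodule.span_induction with
    | mem y h => exact Submodule.subset_span h
    | zero => exact Submodule.zero_mem _
    | add y z _ _ hy hz => exact Submodule.add_mem _ hy hz
    | smul a y _ hy =>
        have h1 : (Polynomial.C a : Polynomial k) • y = a • y := by
          rw [hsmul, Polynomial.aeval_C, MvPolynomial.algebraMap_eq,
            ← MvPolynomial.smul_eq_C_mul]
        rw [← h1]
        exact Submodule.smul_mem _ _ hy
  have hspan : ⊤ ≤ Submodule.span (Polynomial k) (Set.range e) := by
    intro p _
    refine Submodule.iSup_induction _
      (motive := fun x => x ∈ Submodule.span (Polynomial k) (Set.range e))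
      (hStop p) ?_ ?_ ?_
    · intro i x hx
      obtain ⟨v, hv, rfl⟩ := hx
      have h1 : v ∈ Submodule.span (Polynomial k) (Set.range e) := hkB v (hVt_span v hv)
      have h2 : (LinearMap.mulLeft k (f ^ i)) v = (Polynomial.X ^ i : Polynomial k) • v := by
        rw [hsmul, map_pow, Polynomial.aeval_X, LinearMap.mulLeft_apply]
      rw [h2]
      exact Submodule.smul_mem _ _ h1
    · exact Submodule.zero_mem _
    · intro x y hx hy
      exact Submodule.add_mem _ hx hy
  have hli : LinearIndependent (Polynomial k) e := by
    rw [linearIndependent_iff]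
    intro l hl
    set N := (l.support.sup fun j => (l j).natDegree) + 1 with hN
    set v : ℕ → MvPolynomial (Fin n) k :=
      fun i => ∑ j ∈ l.support, (l j).coeff i • e j with hv
    have hvV : ∀ i, v i ∈ Vt := fun i =>
      Submodule.sum_mem _ fun j _ => Submodule.smul_mem _ _ (heV j)
    have hl' : ∑ j ∈ l.support, (l j) • e j = 0 := by
      rw [Finsupp.linearCombination_apply, Finsupp.sum] at hl
      exact hl
    have hsum : ∑ i ∈ Finset.range N, f ^ i * v i = 0 := by
      calc ∑ i ∈ Finset.range N, f ^ i * v i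
          = ∑ i ∈ Finset.range N, ∑ j ∈ l.support, (l j).coeff i • (f ^ i * e j) := by
            refine Finset.sum_congr rfl fun i _ => ?_
            rw [hv, Finset.mul_sum]
            exact Finset.sum_congr rfl fun j _ => (mul_smul_comm _ _ _)
        _ = ∑ j ∈ l.support, ∑ i ∈ Finset.range N, (l j).coeff i • (f ^ i * e j) :=
            Finset.sum_comm
        _ = ∑ j ∈ l.support, (l j) • e j := by
            refine Finset.sum_congr rfl fun j hj => ?_
            rw [hsmul, Polynomial.aeval_eq_sum_range'
              (Nat.lt_succ_of_le (Finset.le_sup (f := fun j => (l j).natDegree) hj)),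
              Finset.sum_mul]
            exact Finset.sum_congr rfl fun i _ => (smul_mul_assoc _ _ _).symm
        _ = 0 := hl'
    have hzero := hD N v hvV hsum
    apply Finsupp.ext
    intro j
    by_cases hj : j ∈ l.support
    · apply Polynomial.ext
      intro i
      rw [show ((0 : Module.Basis.ofVectorSpaceIndex k ↥Vt →₀ Polynomial k) j) = 0 from rfl,
        Polynomial.coeff_zero]
      by_cases hi : i < N
      · have := hzero i hi
        rw [hv] at this
        exact linearIndependent_iff'.mp hek l.support (fun j => (l j).coeff i) this j hj
      · refine Polynomial.coeff_eq_zero_of_natDegree_lt ?_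
        have h2 : (l j).natDegree ≤ l.support.sup fun j => (l j).natDegree :=
          Finset.le_sup (f := fun j => (l j).natDegree) hj
        omega
    · exact Finsupp.notMem_support_iff.mp hj
  exact Module.Free.of_basis (Module.Basis.mk hli hspan)
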